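/- Let μ be a Borel probability measure on ℝ, m : ℝ → ℝ Borel measurable with ∫|m| dμ < ∞, let (x,y) ∈ Ω(μ,m) with sup_i |y_i| < ∞, let u ∈ ℝ be an atom of μ (μ({u}) > 0), and let (n_k)_{k≥1} be any sequence of positive integers with n_k → ∞. Then ν̂_{n_k}(π_k[u]) / μ̂_{n_k}(π_k[u]) → ν({u}) / μ({u}) as k → ∞. -/

import Mathlib

open MeasureTheory Filter Set

noncomputable section

/-- Empirical distribution of the first `n` terms of `x`. -/
def muHat (x : ℕ → ℝ) (n : ℕ) (A : Set ℝ) : ℝ :=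
  (∑ i ∈ Finset.range n, A.indicator (fun _ => (1 : ℝ)) (x i)) / n

/-- Joint sample average `ν̂_n(A) = (1/n) ∑_{i=1}^n y_i · 1{x_i ∈ A}`. -/
def nuHat (x y : ℕ → ℝ) (n : ℕ) (A : Set ℝ) : ℝ :=
  (∑ i ∈ Finset.range n, A.indicator (fun _ => y i) (x i)) / n

/-- The signed measure `ν(A) = ∫_A m dμ`. -/
def nuM (μ : Measure ℝ) (m : ℝ → ℝ) (A : Set ℝ) : ℝ := ∫ t in A, m t ∂μ

/-- `(x,y) ∈ Ω(μ,m)`: `x` has limiting distribution `μ` and `(x,y)` has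
limiting regression `m`. -/
def memOmega (μ : Measure ℝ) (m : ℝ → ℝ) (x y : ℕ → ℝ) : Prop :=
  (∀ t : ℝ, Tendsto (fun n => muHat x n (Iic t)) atTop (nhds (μ (Iic t)).toReal)) ∧
  (∀ t : ℝ, Tendsto (fun n => muHat x n {t}) atTop (nhds (μ {t}).toReal)) ∧
  (∀ t : ℝ, Tendsto (fun n => nuHat x y n (Iic t)) atTop (nhds (nuM μ m (Iic t)))) ∧
  (∀ t : ℝ, Tendsto (fun n => nuHat x y n {t}) atTop (nhds (nuM μ m {t})))

/-- `λ`, the uniform distribution on `[0,1]`. -/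
def unifMeasure : Measure ℝ := volume.restrict (Icc 0 1)

/-- For `k ≥ 1`, the cell `π_k[t]` of the dyadic partition `π_k` containing `t`. -/
def dyadCell (k : ℕ) (t : ℝ) : Set ℝ :=
  Ioc (((⌈t * 2 ^ k⌉ : ℝ) - 1) / 2 ^ k) ((⌈t * 2 ^ k⌉ : ℝ) / 2 ^ k)

lemma mem_dyadCell (k : ℕ) (t : ℝ) : t ∈ dyadCell k t := by
  have h2 : (0:ℝ) < 2 ^ k := by positivity
  constructor
  · rw [div_lt_iff₀ h2]
    have := Int.ceil_lt_add_one (t * 2 ^ k)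
    linarith
  · rw [le_div_iff₀ h2]
    exact Int.le_ceil _

lemma dyadCell_antitone (t : ℝ) : Antitone (fun k => dyadCell k t) := by
  apply antitone_nat_of_succ_le
  intro k
  have h2 : (0:ℝ) < 2 ^ k := by positivity
  have h2' : (0:ℝ) < 2 ^ (k+1) := by positivity
  have hp : (2:ℝ) ^ (k+1) = 2 ^ k * 2 := pow_succ 2 k
  apply Ioc_subset_Ioc
  · rw [div_le_div_iff₀ h2 h2']
    have hlt : (2 * ⌈t * 2 ^ k⌉ - 2 : ℤ) < ⌈t * 2 ^ (k+1)⌉ := by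
      rw [Int.lt_ceil]
      push_cast
      have h := Int.ceil_lt_add_one (t * 2 ^ k)
      rw [hp]
      linarith
    have hle : (2 * ⌈t * 2 ^ k⌉ - 2 : ℤ) ≤ ⌈t * 2 ^ (k+1)⌉ - 1 := by omega
    have hle' : ((2 * ⌈t * 2 ^ k⌉ - 2 : ℤ) : ℝ) ≤ ((⌈t * 2 ^ (k+1)⌉ - 1 : ℤ) : ℝ) :=
      Int.cast_le.2 hle
    push_cast at hle'
    rw [hp] at hle' ⊢
    nlinarith [mul_le_mul_of_nonneg_right hle' h2.le]
  · rw [div_le_div_iff₀ h2' h2]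
    have hle : (⌈t * 2 ^ (k+1)⌉ : ℤ) ≤ 2 * ⌈t * 2 ^ k⌉ := by
      rw [Int.ceil_le]
      push_cast
      have h := Int.le_ceil (t * 2 ^ k)
      rw [hp]
      linarith
    have hle' : ((⌈t * 2 ^ (k+1)⌉ : ℤ) : ℝ) ≤ ((2 * ⌈t * 2 ^ k⌉ : ℤ) : ℝ) := Int.cast_le.2 hle
    push_cast at hle'
    rw [hp] at hle' ⊢
    nlinarith [mul_le_mul_of_nonneg_right hle' h2.le]

lemma iInter_dyadCell (t : ℝ) : ⋂ k, dyadCell k t = {t} := by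
  ext s
  simp only [mem_iInter, mem_singleton_iff]
  constructor
  · intro h
    by_contra hne
    have habs : 0 < |s - t| := abs_pos.2 (sub_ne_zero.2 hne)
    obtain ⟨k, hk⟩ := exists_pow_lt_of_lt_one habs (by norm_num : (1:ℝ)/2 < 1)
    have hs := h k
    have ht := mem_dyadCell k t
    have h2 : (0:ℝ) < 2 ^ k := by positivity
    have hwidth : ((⌈t * 2 ^ k⌉ : ℝ)) / 2 ^ k - (((⌈t * 2 ^ k⌉ : ℝ) - 1) / 2 ^ k) = 1 / 2 ^ k := by
      field_simp
      ring
    have h1 : |s - t| < 1 / 2 ^ k := by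
      rw [abs_sub_lt_iff]
      obtain ⟨hs1, hs2⟩ := hs
      obtain ⟨ht1, ht2⟩ := ht
      constructor <;> linarith
    have heq : (1:ℝ)/2^k = (1/2)^k := by rw [div_pow, one_pow]
    rw [heq] at h1
    linarith
  · rintro rfl
    exact fun k => mem_dyadCell k _

lemma muHat_mono (x : ℕ → ℝ) (N : ℕ) {A B : Set ℝ} (h : A ⊆ B) :
    muHat x N A ≤ muHat x N B := by
  unfold muHat
  apply div_le_div_of_nonneg_right ?_ (Nat.cast_nonneg N)
  exact Finset.sum_le_sum fun i _ =>
    Set.indicator_le_indicator_of_subset h (fun _ => zero_le_one) (x i)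

lemma muHat_Ioc (x : ℕ → ℝ) (N : ℕ) {a b : ℝ} (hab : a ≤ b) :
    muHat x N (Ioc a b) = muHat x N (Iic b) - muHat x N (Iic a) := by
  unfold muHat
  rw [div_sub_div_same, ← Finset.sum_sub_distrib]
  congr 1
  apply Finset.sum_congr rfl
  intro i _
  rcases le_or_gt (x i) a with h1 | h1
  · have h2 : x i ≤ b := le_trans h1 hab
    simp [Set.indicator_apply, mem_Ioc, mem_Iic, h2, not_lt.2 h1, h1]
  · rcases le_or_gt (x i) b with h2 | h2
    · simp [Set.indicator_apply, mem_Ioc, mem_Iic, h1, h2, not_le.2 h1]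
    · simp [Set.indicator_apply, mem_Ioc, mem_Iic, not_le.2 h1, not_le.2 h2]

lemma nuHat_bound (x y : ℕ → ℝ) (N : ℕ) (C : ℝ) (hC : ∀ i, |y i| ≤ C)
    {A : Set ℝ} {u : ℝ} (hu : u ∈ A) :
    |nuHat x y N A - nuHat x y N {u}| ≤ C * (muHat x N A - muHat x N {u}) := by
  unfold nuHat muHat
  rw [div_sub_div_same, ← Finset.sum_sub_distrib, div_sub_div_same, ← Finset.sum_sub_distrib,
    mul_div_assoc', abs_div, Nat.abs_cast]
  apply div_le_div_of_nonneg_right ?_ (Nat.cast_nonneg N)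
  rw [Finset.mul_sum]
  refine le_trans (Finset.abs_sum_le_sum_abs _ _) (Finset.sum_le_sum ?_)
  intro i _
  by_cases h1 : x i = u
  · subst h1
    simp [Set.indicator_of_mem, hu, Set.indicator_of_mem rfl]
  · have hnot : x i ∉ ({u} : Set ℝ) := by simpa using h1
    by_cases h2 : x i ∈ A
    · simpa [Set.indicator_of_mem h2, Set.indicator_of_notMem hnot] using hC i
    · simp [Set.indicator_of_notMem h2, Set.indicator_of_notMem hnot]

/-- For a stable pair `(x,y) ∈ Ω(μ,m)` with bounded `y`, an atom `u` of `μ`,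
and any sequence `n_k → ∞` of positive integers,
`ν̂_{n_k}(π_k[u]) / μ̂_{n_k}(π_k[u]) → ν({u}) / μ({u})` as `k → ∞`. -/
theorem ratio_tendsto_at_atom
    (μ : Measure ℝ) [IsProbabilityMeasure μ]
    (m : ℝ → ℝ) (hmMeas : Measurable m) (hmInt : Integrable m μ)
    (x y : ℕ → ℝ) (hxy : memOmega μ m x y)
    (hy : ∃ C : ℝ, ∀ i : ℕ, |y i| ≤ C)
    (u : ℝ) (hu : 0 < μ {u})
    (n : ℕ → ℕ) (hpos : ∀ k, 1 ≤ n k) (hn : Tendsto n atTop atTop) :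
    Tendsto (fun k => nuHat x y (n k) (dyadCell k u) / muHat x (n k) (dyadCell k u))
      atTop (nhds (nuM μ m {u} / (μ {u}).toReal)) := by
  classical
  obtain ⟨C, hC⟩ := hy
  have hfin : μ {u} ≠ ⊤ := measure_ne_top μ _
  set L := (μ {u}).toReal with hLdef
  have hL : 0 < L := ENNReal.toReal_pos hu.ne' hfin
  obtain ⟨hIic, hsing, hIicNu, hsingNu⟩ := hxy
  have hmu_u : Tendsto (fun k => muHat x (n k) {u}) atTop (nhds L) := (hsing u).comp hn
  have hnu_u : Tendsto (fun k => nuHat x y (n k) {u}) atTop (nhds (nuM μ m {u})) :=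
    (hsingNu u).comp hn
  have hab : ∀ K : ℕ, ((⌈u * 2 ^ K⌉ : ℝ) - 1) / 2 ^ K ≤ (⌈u * 2 ^ K⌉ : ℝ) / 2 ^ K := fun K =>
    div_le_div_of_nonneg_right (by linarith) (by positivity)
  have hcellK : ∀ K : ℕ, Tendsto (fun k => muHat x (n k) (dyadCell K u)) atTop
      (nhds ((μ (dyadCell K u)).toReal)) := by
    intro K
    have h1 := (hIic ((⌈u * 2 ^ K⌉:ℝ)/2^K)).comp hn
    have h2 := (hIic (((⌈u * 2 ^ K⌉:ℝ)-1)/2^K)).comp hn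
    have hmeasEq : (μ (dyadCell K u)).toReal =
        (μ (Iic ((⌈u * 2 ^ K⌉:ℝ)/2^K))).toReal -
        (μ (Iic (((⌈u * 2 ^ K⌉:ℝ)-1)/2^K))).toReal := by
      rw [dyadCell, ← Iic_sdiff_Iic,
        measure_diff (Iic_subset_Iic.2 (hab K)) measurableSet_Iic.nullMeasurableSet
          (measure_ne_top μ _),
        ENNReal.toReal_sub_of_le (measure_mono (Iic_subset_Iic.2 (hab K))) (measure_ne_top μ _)]
    rw [hmeasEq]
    exact (h1.sub h2).congr fun k => (muHat_Ioc x (n k) (hab K)).symm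
  have hmeasTendsto : Tendsto (fun K => (μ (dyadCell K u)).toReal) atTop (nhds L) := by
    have h := tendsto_measure_iInter_atTop (μ := μ) (s := fun k => dyadCell k u)
      (fun k => measurableSet_Ioc.nullMeasurableSet) (dyadCell_antitone u)
      ⟨0, measure_ne_top _ _⟩
    rw [iInter_dyadCell u] at h
    exact (ENNReal.tendsto_toReal hfin).comp h
  have hmain : Tendsto (fun k => muHat x (n k) (dyadCell k u)) atTop (nhds L) := by
    rw [Metric.tendsto_nhds]
    intro ε hε
    obtain ⟨K, hK⟩ :=
      (hmeasTendsto.eventually (gt_mem_nhds (show L < L + ε/2 by linarith))).exists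
    have h1 : ∀ᶠ k in atTop, muHat x (n k) (dyadCell K u) < L + ε :=
      (hcellK K).eventually_lt_const (by linarith)
    have h2 : ∀ᶠ k in atTop, L - ε < muHat x (n k) {u} :=
      hmu_u.eventually_const_lt (by linarith)
    filter_upwards [h1, h2, eventually_ge_atTop K] with k hk1 hk2 hk3
    have hub : muHat x (n k) (dyadCell k u) ≤ muHat x (n k) (dyadCell K u) :=
      muHat_mono x (n k) (dyadCell_antitone u hk3)
    have hlb : muHat x (n k) {u} ≤ muHat x (n k) (dyadCell k u) :=
      muHat_mono x (n k) (singleton_subset_iff.2 (mem_dyadCell k u))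
    rw [Real.dist_eq, abs_sub_lt_iff]
    constructor <;> linarith
  have hdiff0 : Tendsto (fun k => muHat x (n k) (dyadCell k u) - muHat x (n k) {u})
      atTop (nhds 0) := by
    simpa using hmain.sub hmu_u
  have hnuMain : Tendsto (fun k => nuHat x y (n k) (dyadCell k u)) atTop
      (nhds (nuM μ m {u})) := by
    have hz : Tendsto (fun k => nuHat x y (n k) (dyadCell k u) - nuHat x y (n k) {u})
        atTop (nhds 0) := by
      apply squeeze_zero_norm
        (a := fun k => C * (muHat x (n k) (dyadCell k u) - muHat x (n k) {u}))
      · intro k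
        simpa [Real.norm_eq_abs] using nuHat_bound x y (n k) C hC (mem_dyadCell k u)
      · simpa using hdiff0.const_mul C
    simpa using hz.add hnu_u
  exact hnuMain.div hmain hL.ne'
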